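/- For any positive semidefinite matrix E, positive definite matrix D and self-adjoint matrix C, one has (Tr CDE)² ≤ (Tr E C D C)(Tr D E). -/

import Mathlib

open Matrix
open scoped ComplexOrder
open scoped MatrixOrder

noncomputable def mvec {n : ℕ} (M : Matrix (Fin n) (Fin n) ℂ) :
    EuclideanSpace ℂ (Fin n × Fin n) :=
  (WithLp.equiv 2 _).symm (fun p => M p.1 p.2)

lemma mvec_inner {n : ℕ} (X Y : Matrix (Fin n) (Fin n) ℂ) :
    @inner ℂ _ _ (mvec X) (mvec Y) = (Xᴴ * Y).trace := by
  simp only [mvec, Matrix.trace, Matrix.diag, Matrix.mul_apply, PiLp.inner_apply,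
    RCLike.inner_apply, Matrix.conjTranspose_apply, WithLp.equiv_symm_apply, PiLp.toLp_apply,
    Fintype.sum_prod_type]
  rw [Finset.sum_comm]
  simp [mul_comm]

lemma trace_cs {n : ℕ} (X Y : Matrix (Fin n) (Fin n) ℂ) :
    ‖(Xᴴ * Y).trace‖ ^ 2 ≤ (Xᴴ * X).trace.re * (Yᴴ * Y).trace.re := by
  have h2 : ‖(Xᴴ * Y).trace‖ ≤ ‖mvec X‖ * ‖mvec Y‖ := by
    rw [← mvec_inner]; exact norm_inner_le_norm (𝕜 := ℂ) _ _
  have hX : (Xᴴ * X).trace.re = ‖mvec X‖ ^ 2 := by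
    rw [← mvec_inner]; exact @inner_self_eq_norm_sq ℂ _ _ _ _ (mvec X)
  have hY : (Yᴴ * Y).trace.re = ‖mvec Y‖ ^ 2 := by
    rw [← mvec_inner]; exact @inner_self_eq_norm_sq ℂ _ _ _ _ (mvec Y)
  rw [hX, hY, ← mul_pow]
  exact pow_le_pow_left₀ (norm_nonneg _) h2 2

theorem stmt8 {n : ℕ} (E D C : Matrix (Fin n) (Fin n) ℂ)
    (hE : E.PosSemidef) (hD : D.PosDef) (hC : C.IsHermitian) :
    ‖(C * D * E).trace‖ ^ 2 ≤ (E * C * D * C).trace.re * (D * E).trace.re := by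
  set sE := CFC.sqrt E with hsEdef
  set sD := CFC.sqrt D with hsDdef
  have hsE : sEᴴ = sE := (CFC.sqrt_nonneg E).posSemidef.1
  have hsD : sDᴴ = sD := (CFC.sqrt_nonneg D).posSemidef.1
  have hEE : sE * sE = E := CFC.sqrt_mul_sqrt_self E hE.nonneg
  have hDD : sD * sD = D := CFC.sqrt_mul_sqrt_self D hD.posSemidef.nonneg
  have key := trace_cs (X := sD * C * sE) (Y := sD * sE)
  have e1 : (sD * C * sE)ᴴ = sE * C * sD := by
    simp [Matrix.conjTranspose_mul, hsE, hsD, hC.eq, Matrix.mul_assoc]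
  rw [e1] at key
  have t1 : (sE * C * sD * (sD * sE)).trace = (C * D * E).trace := by
    have : sE * C * sD * (sD * sE) = sE * C * D * sE := by
      simp only [← Matrix.mul_assoc]
      rw [Matrix.mul_assoc (sE * C) sD sD, hDD]
    rw [this, Matrix.trace_mul_cycle (sE * C) D sE, ← Matrix.mul_assoc sE sE C, hEE,
      Matrix.trace_mul_cycle E C D, Matrix.trace_mul_cycle D E C]
  have t2 : (sE * C * sD * (sD * C * sE)).trace = (E * C * D * C).trace := by
    have : sE * C * sD * (sD * C * sE) = sE * C * D * C * sE := by
      simp only [← Matrix.mul_assoc]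
      rw [Matrix.mul_assoc (sE * C) sD sD, hDD]
    rw [this, Matrix.trace_mul_cycle (sE * C * D) C sE, ← Matrix.mul_assoc,
      ← Matrix.mul_assoc sE sE C, hEE]
  have t3 : ((sD * sE)ᴴ * (sD * sE)).trace = (D * E).trace := by
    have he : (sD * sE)ᴴ = sE * sD := by simp [Matrix.conjTranspose_mul, hsE, hsD]
    rw [he]
    have : sE * sD * (sD * sE) = sE * D * sE := by
      simp only [← Matrix.mul_assoc]
      rw [Matrix.mul_assoc sE sD sD, hDD]
    rw [this, Matrix.trace_mul_cycle sE D sE, hEE, Matrix.trace_mul_comm]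
  rwa [t1, t2, t3] at key
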